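/- Let j ≥ 1 and p ≥ 3 be integers, and let G be a K_{1,p}-free graph with minimum degree δ(G) ≥ j − 1. Then α_j(G) ≤ j(p−1)n(G) / (j(p−1) + δ(G) − (j−1)). -/

import Mathlib

open Finset

namespace DSI

variable {V : Type*} (G : SimpleGraph V) [Fintype V] [DecidableEq V] [DecidableRel G.Adj]

/-- The degree sequence of `G`, sorted in non-decreasing order. -/
def dseq : List ℕ := (Finset.univ.val.map (fun v => G.degree v)).sort (· ≤ ·)

/-- The sum of the `k` smallest degrees, `Σ_{i=1}^k d_i`. -/
def sumSmallest (k : ℕ) : ℕ := ((dseq G).take k).sum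

/-- The sum of the `k` largest degrees, `Σ_{i=1}^k d_{n-i+1}`. -/
def sumLargest (k : ℕ) : ℕ := ((dseq G).reverse.take k).sum

/-- The number of edges `m(G)`. -/
def esize : ℕ := G.edgeFinset.card

/-- `m[S]`: the number of edges of the subgraph induced by `S`. -/
def mOn (S : Finset V) : ℕ := (S.sym2.filter (fun e => e ∈ G.edgeSet)).card

/-- A set `I` is `j`-independent if every vertex of `I` has fewer than `j` neighbours in `I`,
i.e. the induced subgraph has maximum degree `< j`. -/
def JIndep (j : ℕ) (I : Finset V) : Prop := ∀ v ∈ I, (I.filter (G.Adj v)).card < j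

/-- The `j`-independence number `α_j(G)`. -/
noncomputable def alphaJ (j : ℕ) : ℕ := sSup {k | ∃ I : Finset V, JIndep G j I ∧ I.card = k}

/-- The family `F` of maximum `j`-independent sets. -/
noncomputable def maxJIndep (j : ℕ) : Set (Finset V) :=
  {S | JIndep G j S ∧ S.card = alphaJ G j}

/-- `max_{S ∈ F} (m[V−S] − m[S])`. -/
noncomputable def fU (j : ℕ) : ℤ :=
  sSup ((fun S : Finset V => (mOn G Sᶜ : ℤ) - (mOn G S : ℤ)) '' maxJIndep G j)

/-- `min_{S ∈ F} (m[V−S] − m[S])`. -/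
noncomputable def fL (j : ℕ) : ℤ :=
  sInf ((fun S : Finset V => (mOn G Sᶜ : ℤ) - (mOn G S : ℤ)) '' maxJIndep G j)

/-- The upper `j`-annihilation number `a_j(G)`. -/
noncomputable def aJ (j : ℕ) : ℕ :=
  sSup {k | k ≤ Fintype.card V ∧ (sumSmallest G k : ℤ) + fU G j ≤ (esize G : ℤ)}

/-- The lower `j`-annihilation number `c_j(G)`. -/
noncomputable def cJ (j : ℕ) : ℕ :=
  sInf {k | k ≤ Fintype.card V ∧ (esize G : ℤ) ≤ (sumLargest G k : ℤ) + fL G j}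

/-- The annihilation number `a(G)`. -/
noncomputable def annihilation : ℕ :=
  sSup {k | k ≤ Fintype.card V ∧ sumSmallest G k ≤ esize G}

/-- An independent set. -/
def IndepSet (I : Finset V) : Prop := ∀ v ∈ I, ∀ w ∈ I, ¬ G.Adj v w

/-- The independence number `α(G)`. -/
noncomputable def alpha : ℕ := sSup {k | ∃ I : Finset V, IndepSet G I ∧ I.card = k}

end DSI
/-- `G` is `K_{1,p}`-free: it has no induced star `K_{1,p}`, i.e. no vertex `v` together
with a set `s` of `p` pairwise non-adjacent neighbours of `v`. -/
def DSI.K1pFree {V : Type*} (G : SimpleGraph V) (p : ℕ) : Prop :=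
  ¬ ∃ (v : V) (s : Finset V), s.card = p ∧ v ∉ s ∧ (∀ w ∈ s, G.Adj v w) ∧
      ∀ w ∈ s, ∀ u ∈ s, ¬ G.Adj w u

/-- The index `w(G) = max { k | Σ_{i=1}^k d_i + (1/2) Σ_{i=k+1}^n d_i
    - (n-k)(p-1)/2 ≤ m(G) }`. -/
noncomputable def DSI.wIdx {V : Type*} (G : SimpleGraph V) [Fintype V]
    [DecidableEq V] [DecidableRel G.Adj] (p : ℕ) : ℕ :=
  sSup {k | k ≤ Fintype.card V ∧
    (DSI.sumSmallest G k : ℚ) + (1 / 2) * ((((DSI.dseq G).drop k).sum : ℕ) : ℚ)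
      - ((Fintype.card V : ℚ) - (k : ℚ)) * ((p : ℚ) - 1) / 2 ≤ (DSI.esize G : ℚ)}
section Aux

variable {V : Type*} (G : SimpleGraph V) [Fintype V] [DecidableEq V] [DecidableRel G.Adj]

lemma alphaJ_attained (j : ℕ) :
    ∃ I : Finset V, DSI.JIndep G j I ∧ I.card = DSI.alphaJ G j := by
  have hne : {k | ∃ I : Finset V, DSI.JIndep G j I ∧ I.card = k}.Nonempty :=
    ⟨0, ∅, by intro v hv; simp at hv, by simp⟩
  have hbdd : BddAbove {k | ∃ I : Finset V, DSI.JIndep G j I ∧ I.card = k} := by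
    refine ⟨Fintype.card V, ?_⟩
    rintro k ⟨I, -, rfl⟩
    simpa using Finset.card_le_univ I
  exact Nat.sSup_mem hne hbdd

lemma greedy_indep (j : ℕ) (hj : 1 ≤ j) :
    ∀ I : Finset V, (∀ v ∈ I, (I.filter (G.Adj v)).card < j) →
      ∃ A ⊆ I, (∀ v ∈ A, ∀ w ∈ A, ¬ G.Adj v w) ∧ I.card ≤ j * A.card := by
  intro I
  induction I using Finset.strongInduction with
  | _ I ih =>
    intro hI
    rcases eq_or_ne I ∅ with rfl | hI0
    · exact ⟨∅, by simp⟩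
    obtain ⟨v, hv⟩ := Finset.nonempty_iff_ne_empty.2 hI0
    set D : Finset V := insert v (I.filter (G.Adj v)) with hD
    set I' : Finset V := I \ D with hI'def
    have hvD : v ∈ D := Finset.mem_insert_self _ _
    have hssub : I' ⊂ I := by
      refine Finset.ssubset_iff_of_subset (Finset.sdiff_subset) |>.2 ⟨v, hv, ?_⟩
      simp [hI'def, hvD]
    have hI'cond : ∀ w ∈ I', (I'.filter (G.Adj w)).card < j := by
      intro w hw
      have hwI : w ∈ I := (Finset.mem_sdiff.1 hw).1
      exact lt_of_le_of_lt
        (Finset.card_le_card (Finset.filter_subset_filter _ Finset.sdiff_subset))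
        (hI w hwI)
    obtain ⟨A', hA'sub, hA'ind, hA'card⟩ := ih I' hssub hI'cond
    have hvA' : v ∉ A' := fun h => by
      have := hA'sub h
      simp [hI'def, hvD] at this
    have hvnadj : ∀ w ∈ A', ¬ G.Adj v w := by
      intro w hw hadj
      have hwI' := hA'sub hw
      have hwI : w ∈ I := (Finset.mem_sdiff.1 hwI').1
      have : w ∈ D := Finset.mem_insert.2 (Or.inr (Finset.mem_filter.2 ⟨hwI, hadj⟩))
      exact (Finset.mem_sdiff.1 hwI').2 this
    refine ⟨insert v A', ?_, ?_, ?_⟩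
    · intro x hx
      rcases Finset.mem_insert.1 hx with rfl | hx
      · exact hv
      · exact (Finset.mem_sdiff.1 (hA'sub hx)).1
    · intro x hx y hy hadj
      rcases Finset.mem_insert.1 hx with hx1 | hx2
      · rcases Finset.mem_insert.1 hy with hy1 | hy2
        · subst hx1; subst hy1; exact G.loopless.irrefl _ hadj
        · subst hx1; exact hvnadj y hy2 hadj
      · rcases Finset.mem_insert.1 hy with hy1 | hy2
        · subst hy1; exact hvnadj x hx2 hadj.symm
        · exact hA'ind x hx2 y hy2 hadj
    · have hDcard : D.card ≤ j := by
        calc D.card ≤ (I.filter (G.Adj v)).card + 1 := Finset.card_insert_le _ _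
        _ ≤ j := Nat.succ_le_of_lt (hI v hv)
      have hsplit : I.card ≤ I'.card + D.card := by
        have : I ⊆ I' ∪ D := by
          intro x hx
          by_cases hxD : x ∈ D
          · exact Finset.mem_union.2 (Or.inr hxD)
          · exact Finset.mem_union.2 (Or.inl (Finset.mem_sdiff.2 ⟨hx, hxD⟩))
        exact le_trans (Finset.card_le_card this) (Finset.card_union_le _ _)
      have hcardins : (insert v A').card = A'.card + 1 := Finset.card_insert_of_notMem hvA'
      calc I.card ≤ I'.card + D.card := hsplit
        _ ≤ j * A'.card + j := by omega
        _ = j * (A'.card + 1) := by ring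
        _ = j * (insert v A').card := by rw [hcardins]

end Aux

theorem alphaJ_K1pFree_bound {V : Type*} (G : SimpleGraph V) [Fintype V] [Nonempty V]
    [DecidableEq V] [DecidableRel G.Adj] (j p : ℕ) (hj : 1 ≤ j) (hp : 3 ≤ p)
    (hfree : DSI.K1pFree G p) (hdelta : j - 1 ≤ G.minDegree) :
    (DSI.alphaJ G j : ℚ) ≤
      (j : ℚ) * ((p : ℚ) - 1) * (Fintype.card V : ℚ) /
        ((j : ℚ) * ((p : ℚ) - 1) + (G.minDegree : ℚ) - ((j : ℚ) - 1)) := by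
  classical
  obtain ⟨I, hIind, hIcard⟩ := alphaJ_attained G j
  obtain ⟨A, hAI, hAind, hAcard⟩ := greedy_indep G j hj I hIind
  rw [← hIcard]
  -- each vertex of A has at least δ - (j-1) neighbours outside I
  have hdeg : ∀ v ∈ A, G.minDegree - (j - 1) ≤ (Iᶜ.filter (G.Adj v)).card := by
    intro v hv
    have hsplit : (I.filter (G.Adj v)).card + (Iᶜ.filter (G.Adj v)).card = G.degree v := by
      rw [← Finset.card_union_of_disjoint]
      · rw [← Finset.filter_union, Finset.union_compl]
        rw [SimpleGraph.degree]
        congr 1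
        ext w
        simp [SimpleGraph.mem_neighborFinset]
      · exact Finset.disjoint_filter_filter disjoint_compl_right
    have h1 : (I.filter (G.Adj v)).card < j := hIind v (hAI hv)
    have h2 : G.minDegree ≤ G.degree v := G.minDegree_le_degree v
    omega
  -- each vertex outside I has at most p - 1 neighbours in A
  have hstar : ∀ u ∈ Iᶜ, (A.filter (G.Adj u)).card ≤ p - 1 := by
    intro u hu
    by_contra hgt
    push_neg at hgt
    have hple : p ≤ (A.filter (G.Adj u)).card := by omega
    obtain ⟨s, hsub, hscard⟩ := Finset.exists_subset_card_eq hple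
    refine hfree ⟨u, s, hscard, ?_, ?_, ?_⟩
    · intro hus
      have : u ∈ A := (Finset.mem_filter.1 (hsub hus)).1
      exact (Finset.mem_compl.1 hu) (hAI this)
    · exact fun w hw => (Finset.mem_filter.1 (hsub hw)).2
    · intro w hw x hx
      exact hAind w (Finset.mem_filter.1 (hsub hw)).1 x (Finset.mem_filter.1 (hsub hx)).1
  -- double counting
  have hdouble : ∑ v ∈ A, (Iᶜ.filter (G.Adj v)).card
      = ∑ u ∈ Iᶜ, (A.filter (G.Adj u)).card := by
    simp_rw [Finset.card_filter]
    rw [Finset.sum_comm]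
    refine Finset.sum_congr rfl fun u _ => Finset.sum_congr rfl fun v _ => ?_
    simp [G.adj_comm]
  have hlow : (G.minDegree - (j - 1)) * A.card ≤ ∑ v ∈ A, (Iᶜ.filter (G.Adj v)).card := by
    calc (G.minDegree - (j - 1)) * A.card = ∑ _v ∈ A, (G.minDegree - (j - 1)) := by
          rw [Finset.sum_const, smul_eq_mul, mul_comm]
      _ ≤ _ := Finset.sum_le_sum hdeg
  have hhigh : ∑ u ∈ Iᶜ, (A.filter (G.Adj u)).card ≤ (p - 1) * Iᶜ.card := by
    calc ∑ u ∈ Iᶜ, (A.filter (G.Adj u)).card ≤ ∑ _u ∈ Iᶜ, (p - 1) :=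
          Finset.sum_le_sum hstar
      _ = (p - 1) * Iᶜ.card := by rw [Finset.sum_const, smul_eq_mul, mul_comm]
  have hkey : (G.minDegree - (j - 1)) * A.card ≤ (p - 1) * Iᶜ.card :=
    le_trans hlow (hdouble ▸ hhigh)
  -- pass to ℚ
  have hIcardn : I.card ≤ Fintype.card V := Finset.card_le_univ I
  have hcompl : Iᶜ.card = Fintype.card V - I.card := Finset.card_compl I
  have hc1 : (((G.minDegree - (j - 1)) : ℕ) : ℚ) = (G.minDegree : ℚ) - ((j : ℚ) - 1) := by
    rw [Nat.cast_sub hdelta, Nat.cast_sub hj]; push_cast; ring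
  have hc2 : (((p - 1) : ℕ) : ℚ) = (p : ℚ) - 1 := by
    rw [Nat.cast_sub (by omega : 1 ≤ p)]; push_cast; ring
  have hc3 : ((Iᶜ.card : ℕ) : ℚ) = (Fintype.card V : ℚ) - (I.card : ℚ) := by
    rw [hcompl, Nat.cast_sub hIcardn]
  have hkeyQ : ((G.minDegree : ℚ) - ((j : ℚ) - 1)) * (A.card : ℚ)
      ≤ ((p : ℚ) - 1) * ((Fintype.card V : ℚ) - (I.card : ℚ)) := by
    have hq : (((G.minDegree - (j - 1)) * A.card : ℕ) : ℚ)
        ≤ (((p - 1) * Iᶜ.card : ℕ) : ℚ) := by exact_mod_cast hkey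
    rwa [Nat.cast_mul, Nat.cast_mul, hc1, hc2, hc3] at hq
  have hαa : (I.card : ℚ) ≤ (j : ℚ) * (A.card : ℚ) := by exact_mod_cast hAcard
  have hδj : ((j : ℚ) - 1) ≤ (G.minDegree : ℚ) := by
    have h : (((j - 1 : ℕ)) : ℚ) ≤ (G.minDegree : ℚ) := by exact_mod_cast hdelta
    rw [Nat.cast_sub hj] at h; push_cast at h; linarith
  have hjq : (1 : ℚ) ≤ (j : ℚ) := by exact_mod_cast hj
  have hpq : (3 : ℚ) ≤ (p : ℚ) := by exact_mod_cast hp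
  have hden : 0 < (j : ℚ) * ((p : ℚ) - 1) + (G.minDegree : ℚ) - ((j : ℚ) - 1) := by
    nlinarith
  rw [le_div_iff₀ hden]
  nlinarith [mul_le_mul_of_nonneg_right hαa
      (by linarith : (0 : ℚ) ≤ (G.minDegree : ℚ) - ((j : ℚ) - 1)),
    mul_le_mul_of_nonneg_left hkeyQ (by positivity : (0 : ℚ) ≤ (j : ℚ))]
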